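/- Let f^W be a voting by committees on X = 2^K. For agent i and S ∈ 2^K: S ∈ V_i if and only if there exists k* ∈ K such that either (i) k* ∈ S and i belongs to every coalition in W_{k*}, or (ii) k* ∉ S and {i} ∈ W_{k*}. -/
import Mathlib


/-- A preference profile: each agent `i : Fin n` has a strict preference,
modeled as a linear order on the set of alternatives `X`. -/
abbrev Profile (n : ℕ) (X : Type*) := Fin n → LinearOrder X

/-- The top (best) alternative of a preference `L`. -/
noncomputable def top {X : Type*} [Fintype X] [Nonempty X] (L : LinearOrder X) : X :=
  @Finset.max' X L Finset.univ Finset.univ_nonempty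

/-- `x` is strictly preferred to `y` according to `L`. -/
def prefers {X : Type*} (L : LinearOrder X) (x y : X) : Prop := L.lt y x

/-- The option set left open by preference `L` of agent `i` at rule `f`. -/
def OptionSet {n : ℕ} {X : Type*} (f : Profile n X → X) (i : Fin n) (L : LinearOrder X) :
    Set X :=
  {x | ∃ P : Profile n X, P i = L ∧ f P = x}

/-- `Li'` is a profitable manipulation of `f` at (true preference) `Li` for agent `i`. -/
def IsManip {n : ℕ} {X : Type*} (f : Profile n X → X) (i : Fin n)
    (Li Li' : LinearOrder X) : Prop :=
  ∃ P : Profile n X, P i = Li ∧ prefers Li (f (Function.update P i Li')) (f P)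

/-- The worst element of `O(Li')` is strictly `Li`-preferred to the worst element of `O(Li)`.
For nonempty finite option sets this is equivalent to: some element of `O(Li)` is strictly
worse (w.r.t. `Li`) than every element of `O(Li')`. -/
def WorstImproves {n : ℕ} {X : Type*} (f : Profile n X → X) (i : Fin n)
    (Li Li' : LinearOrder X) : Prop :=
  ∃ w ∈ OptionSet f i Li, ∀ w' ∈ OptionSet f i Li', prefers Li w' w

/-- The best element of `O(Li')` is strictly `Li`-preferred to the best element of `O(Li)`.
For nonempty finite option sets this is equivalent to: some element of `O(Li')` is strictly
better (w.r.t. `Li`) than every element of `O(Li)`. -/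
def BestImproves {n : ℕ} {X : Type*} (f : Profile n X → X) (i : Fin n)
    (Li Li' : LinearOrder X) : Prop :=
  ∃ b' ∈ OptionSet f i Li', ∀ b ∈ OptionSet f i Li, prefers Li b' b

/-- `Li'` is an obvious manipulation of `f` at `Li` for agent `i`. -/
def IsObviousManip {n : ℕ} {X : Type*} (f : Profile n X → X) (i : Fin n)
    (Li Li' : LinearOrder X) : Prop :=
  IsManip f i Li Li' ∧ (WorstImproves f i Li Li' ∨ BestImproves f i Li Li')

/-- `f` is not obviously manipulable. -/
def NOM {n : ℕ} {X : Type*} (f : Profile n X → X) : Prop :=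
  ∀ (i : Fin n) (Li Li' : LinearOrder X), ¬ IsObviousManip f i Li Li'

/-- `f` is tops-only. -/
def TopsOnly {n : ℕ} {X : Type*} [Fintype X] [Nonempty X] (f : Profile n X → X) : Prop :=
  ∀ P P' : Profile n X, (∀ i, top (P i) = top (P' i)) → f P = f P'

/-- The set `V_i` of alternatives that agent `i` vetoes via some preference. -/
def VetoSet {n : ℕ} {X : Type*} (f : Profile n X → X) (i : Fin n) : Set X :=
  {x | ∃ L : LinearOrder X, x ∉ OptionSet f i L}

/-- The set `SV_i` of alternatives strongly vetoed by agent `i`: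
`x` is vetoed via `L` precisely when the top of `L` differs from `x`. -/
def StrongVetoSet {n : ℕ} {X : Type*} [Fintype X] [Nonempty X]
    (f : Profile n X → X) (i : Fin n) : Set X :=
  {x | ∀ L : LinearOrder X, x ∉ OptionSet f i L ↔ top L ≠ x}

/-- `f` is dictatorial: some agent's top alternative is always selected. -/
def Dictatorial {n : ℕ} {X : Type*} [Fintype X] [Nonempty X]
    (f : Profile n X → X) : Prop :=
  ∃ i : Fin n, ∀ P : Profile n X, f P = top (P i)

open scoped Classical

/-- `Wk` is a committee: a nonempty, monotone family of nonempty coalitions of agents. -/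
def Committee {n : ℕ} (Wk : Set (Finset (Fin n))) : Prop :=
  Wk.Nonempty ∧ (∀ M ∈ Wk, M.Nonempty) ∧
    ∀ M ∈ Wk, ∀ M' : Finset (Fin n), M ⊆ M' → M' ∈ Wk

/-- Voting by committees: object `k` is chosen iff the set of agents whose top contains
`k` is a winning coalition in `W k`. Alternatives are subsets of the set `K` of objects. -/
noncomputable def vbc {n : ℕ} {K : Type*} [Fintype K] [DecidableEq K]
    (W : K → Set (Finset (Fin n))) (P : Profile n (Finset K)) : Finset K :=
  Finset.univ.filter fun k =>
    (Finset.univ.filter fun i : Fin n => k ∈ top (P i)) ∈ W k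

/-- Any element is the top of some linear order. -/
lemma exists_top_eq {X : Type*} [Fintype X] [Nonempty X] (x : X) :
    ∃ L : LinearOrder X, top L = x := by
  classical
  let e : X ≃ Fin (Fintype.card X) := Fintype.equivFin X
  let g : X → ℕ := fun y => if y = x then Fintype.card X else (e y : ℕ)
  have hg : Function.Injective g := by
    intro a b hab
    simp only [g] at hab
    by_cases ha : a = x <;> by_cases hb : b = x
    · rw [ha, hb]
    · rw [if_pos ha, if_neg hb] at hab
      exact absurd hab.symm (Nat.ne_of_lt (e b).isLt)
    · rw [if_neg ha, if_pos hb] at hab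
      exact absurd hab (Nat.ne_of_lt (e a).isLt)
    · rw [if_neg ha, if_neg hb] at hab
      exact e.injective (Fin.val_injective hab)
  refine ⟨LinearOrder.lift' g hg, ?_⟩
  letI L := LinearOrder.lift' g hg
  have hle : ∀ y : X, L.le y x := by
    intro y
    show g y ≤ g x
    by_cases hy : y = x
    · simp [g, hy]
    · simp only [g, if_neg hy, if_pos rfl]
      exact le_of_lt (e y).isLt
  exact L.le_antisymm _ _ (hle _) (Finset.le_max' _ _ (Finset.mem_univ x))

lemma committee_univ {n : ℕ} {Wk : Set (Finset (Fin n))} (h : Committee Wk) :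
    Finset.univ ∈ Wk := by
  obtain ⟨⟨M, hM⟩, _, hmono⟩ := h
  exact hmono M hM _ (Finset.subset_univ M)

lemma committee_empty {n : ℕ} {Wk : Set (Finset (Fin n))} (h : Committee Wk) :
    (∅ : Finset (Fin n)) ∉ Wk := fun hmem => by
  simpa using h.2.1 _ hmem

/-- Characterization of the option set of voting by committees. -/
lemma vbc_optionSet {n : ℕ} {K : Type*} [Fintype K] [DecidableEq K]
    (W : K → Set (Finset (Fin n))) (hW : ∀ k, Committee (W k))
    (i : Fin n) (L : LinearOrder (Finset K)) (S : Finset K) :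
    S ∉ OptionSet (vbc W) i L ↔ ∃ k : K,
      (k ∈ S ∧ k ∉ top L ∧ ∀ M ∈ W k, i ∈ M) ∨
      (k ∉ S ∧ k ∈ top L ∧ ({i} : Finset (Fin n)) ∈ W k) := by
  constructor
  · intro hS
    by_contra hk
    push_neg at hk
    apply hS
    obtain ⟨LS, hLS⟩ := exists_top_eq S
    refine ⟨fun j => if j = i then L else LS, by simp, ?_⟩
    have htop : ∀ j : Fin n, top (if j = i then L else LS) = if j = i then top L else S := by
      intro j; by_cases hj : j = i <;> simp [hj, hLS]
    ext k
    simp only [vbc, Finset.mem_filter, Finset.mem_univ, true_and]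
    simp only [htop]
    by_cases hkS : k ∈ S
    · simp only [hkS, iff_true]
      by_cases hkT : k ∈ top L
      · have : (Finset.univ.filter fun j : Fin n =>
            k ∈ if j = i then top L else S) = Finset.univ := by
          ext j
          simp only [Finset.mem_filter, Finset.mem_univ, true_and, iff_true]
          by_cases hj : j = i <;> simp [hj, hkT, hkS]
        rw [this]; exact committee_univ (hW k)
      · obtain ⟨M, hM, hiM⟩ := (hk k).1 hkS hkT
        refine (hW k).2.2 M hM _ ?_
        intro j hj
        have hji : j ≠ i := fun h => hiM (h ▸ hj)
        simp [Finset.mem_filter, hji, hkS]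
    · simp only [hkS, iff_false]
      by_cases hkT : k ∈ top L
      · have : (Finset.univ.filter fun j : Fin n =>
            k ∈ if j = i then top L else S) = {i} := by
          ext j
          simp only [Finset.mem_filter, Finset.mem_univ, true_and, Finset.mem_singleton]
          by_cases hj : j = i <;> simp [hj, hkT, hkS]
        rw [this]; exact (hk k).2 hkS hkT
      · have : (Finset.univ.filter fun j : Fin n =>
            k ∈ if j = i then top L else S) = ∅ := by
          ext j
          simp only [Finset.mem_filter, Finset.mem_univ, true_and, Finset.notMem_empty,
            iff_false]
          by_cases hj : j = i <;> simp [hj, hkT, hkS]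
        rw [this]; exact committee_empty (hW k)
  · rintro ⟨k, hk⟩ ⟨P, hPi, hfP⟩
    rcases hk with ⟨hkS, hkT, hall⟩ | ⟨hkS, hkT, hsing⟩
    · -- k ∈ S but k cannot be selected
      have hkf : k ∉ vbc W P := by
        simp only [vbc, Finset.mem_filter, Finset.mem_univ, true_and]
        intro hwin
        have : i ∈ Finset.univ.filter fun j : Fin n => k ∈ top (P j) := hall _ hwin
        simp only [Finset.mem_filter, hPi] at this
        exact hkT this.2
      exact hkf (hfP ▸ hkS)
    · -- k ∉ S but k is always selected
      have hkf : k ∈ vbc W P := by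
        simp only [vbc, Finset.mem_filter, Finset.mem_univ, true_and]
        refine (hW k).2.2 _ hsing _ ?_
        intro j hj
        rw [Finset.mem_singleton] at hj
        simp [hj, hPi, hkT]
      exact hkS (hfP ▸ hkf)

/-- For voting by committees: `S ∈ V_i` iff there is an object `k*` with either
`k* ∈ S` and `i` in every coalition of `W k*`, or `k* ∉ S` and `{i} ∈ W k*`. -/
theorem vbc_vetoSet {n : ℕ} {K : Type*} [Fintype K] [DecidableEq K]
    (hn : 2 ≤ n) (hK : 2 ≤ Fintype.card K)
    (W : K → Set (Finset (Fin n))) (hW : ∀ k, Committee (W k))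
    (i : Fin n) (S : Finset K) :
    S ∈ VetoSet (vbc W) i ↔ ∃ k : K,
      (k ∈ S ∧ ∀ M ∈ W k, i ∈ M) ∨ (k ∉ S ∧ ({i} : Finset (Fin n)) ∈ W k) := by
  constructor
  · rintro ⟨L, hL⟩
    obtain ⟨k, hk⟩ := (vbc_optionSet W hW i L S).1 hL
    exact ⟨k, by tauto⟩
  · rintro ⟨k, hk⟩
    rcases hk with ⟨hkS, hall⟩ | ⟨hkS, hsing⟩
    · obtain ⟨L, hL⟩ := exists_top_eq (∅ : Finset K)
      exact ⟨L, (vbc_optionSet W hW i L S).2 ⟨k, Or.inl ⟨hkS, by simp [hL], hall⟩⟩⟩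
    · obtain ⟨L, hL⟩ := exists_top_eq ({k} : Finset K)
      exact ⟨L, (vbc_optionSet W hW i L S).2 ⟨k, Or.inr ⟨hkS, by simp [hL], hsing⟩⟩⟩
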